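/- Let H, δ, η, γ be positive real numbers. Then there exists a unique pair of functions V_u : [0, H] → ℝ and V_l : [−1, 0] → ℝ, each twice continuously differentiable on its (closed) interval, satisfying: V_u″(Z) + 1 = 0 for Z ∈ (0, H); δ² V_l″(Z) − V_l(Z) + η δ² = 0 for Z ∈ (−1, 0); the boundary conditions V_u(H) = 0 and V_l(−1) = 0; and the interface conditions V_u′(0) = ½ γ (V_u(0) − V_l(0)) and V_l′(0) = ½ γ η (V_u(0) − V_l(0)). -/

import Mathlib

noncomputable section

open Set Filter
set_option maxHeartbeats 1000000

/-- `Vu`, `Vl` solve the dimensionless Beavers–Joseph boundary value problem for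
pressure-driven flow of a viscous fluid over a rigid porous medium, with channel height `H`,
permeability parameter `δ`, viscosity ratio `η`, and interface viscosity ratio `γ`. -/
def IsBJSolution (H δ η γ : ℝ) (Vu Vl : ℝ → ℝ) : Prop :=
  ContDiffOn ℝ 2 Vu (Set.Icc 0 H) ∧
  ContDiffOn ℝ 2 Vl (Set.Icc (-1) 0) ∧
  (∀ Z ∈ Set.Ioo (0 : ℝ) H, iteratedDerivWithin 2 Vu (Set.Icc 0 H) Z + 1 = 0) ∧
  (∀ Z ∈ Set.Ioo (-1 : ℝ) 0,
    δ ^ 2 * iteratedDerivWithin 2 Vl (Set.Icc (-1) 0) Z - Vl Z + η * δ ^ 2 = 0) ∧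
  Vu H = 0 ∧
  Vl (-1) = 0 ∧
  derivWithin Vu (Set.Icc 0 H) 0 = (1 / 2) * γ * (Vu 0 - Vl 0) ∧
  derivWithin Vl (Set.Icc (-1) 0) 0 = (1 / 2) * γ * η * (Vu 0 - Vl 0)

lemma myEqOn {a b : ℝ} (hab : a < b) {f g d : ℝ → ℝ}
    (hf : ∀ x ∈ Set.Icc a b, HasDerivWithinAt f (d x) (Set.Icc a b) x)
    (hg : ∀ x ∈ Set.Icc a b, HasDerivWithinAt g (d x) (Set.Icc a b) x)
    (h0 : f a = g a) : ∀ x ∈ Set.Icc a b, f x = g x := by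
  have hs := uniqueDiffOn_Icc hab
  refine eq_of_derivWithin_eq (fun x hx => (hf x hx).differentiableWithinAt)
    (fun x hx => (hg x hx).differentiableWithinAt) (fun x hx => ?_) h0
  have hx' : x ∈ Icc a b := Ico_subset_Icc_self hx
  rw [(hf x hx').derivWithin (hs x hx'), (hg x hx').derivWithin (hs x hx')]

lemma myZeroClosure {a b : ℝ} (hab : a < b) {g : ℝ → ℝ}
    (hg : ContinuousOn g (Set.Icc a b)) (h : ∀ x ∈ Set.Ioo a b, g x = 0) :
    ∀ x ∈ Set.Icc a b, g x = 0 := by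
  intro x hx
  have hcl : x ∈ closure (Set.Ioo a b) := by rw [closure_Ioo hab.ne]; exact hx
  have hne : (nhdsWithin x (Set.Ioo a b)).NeBot := mem_closure_iff_nhdsWithin_neBot.1 hcl
  have h1 : Filter.Tendsto g (nhdsWithin x (Set.Ioo a b)) (nhds (g x)) :=
    (hg x hx).mono Set.Ioo_subset_Icc_self
  have h2 : Filter.Tendsto g (nhdsWithin x (Set.Ioo a b)) (nhds 0) := by
    refine Filter.Tendsto.congr' ?_ tendsto_const_nhds
    filter_upwards [self_mem_nhdsWithin] with y hy using (h y hy).symm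
  exact tendsto_nhds_unique h1 h2


/-- Any solution of `w'' = w/δ²` on `[-1,0]` with `w(-1)=0` has the explicit exponential form. -/
lemma myODE2 {δ : ℝ} (hδ : 0 < δ) {w : ℝ → ℝ}
    (hdw : DifferentiableOn ℝ w (Set.Icc (-1) 0))
    (hdfw : DifferentiableOn ℝ (derivWithin w (Set.Icc (-1) 0)) (Set.Icc (-1) 0))
    (hfw : ∀ x ∈ Set.Icc (-1:ℝ) 0,
      derivWithin (derivWithin w (Set.Icc (-1) 0)) (Set.Icc (-1) 0) x = w x / δ^2)
    (hwm1 : w (-1) = 0) :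
    ∃ C0 : ℝ,
      (∀ x ∈ Set.Icc (-1:ℝ) 0, w x * Real.exp (x/δ)
        = (C0*δ/2) * (Real.exp (x/δ))^2 - (C0*δ/2) * (Real.exp ((-1:ℝ)/δ))^2) ∧
      derivWithin w (Set.Icc (-1) 0) 0 + (1/δ) * w 0 = C0 := by
  have hδ0 : δ ≠ 0 := hδ.ne'
  have hm10 : (-1:ℝ) < 0 := by norm_num
  have h0sl : (0:ℝ) ∈ Set.Icc (-1:ℝ) 0 := Set.right_mem_Icc.2 hm10.le
  have hEpos : ∀ x : ℝ, HasDerivAt (fun y : ℝ => Real.exp (y/δ)) (Real.exp (x/δ) * (1/δ)) x :=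
    fun x => by have := (Real.hasDerivAt_exp (x/δ)).comp x ((hasDerivAt_id x).div_const δ); exact this
  have hEneg : ∀ x : ℝ, HasDerivAt (fun y : ℝ => Real.exp (-y/δ)) (Real.exp (-x/δ) * (-1/δ)) x := by
    intro x
    have hinner : HasDerivAt (fun y : ℝ => -y/δ) (-1/δ) x := by
      simpa using ((hasDerivAt_id x).neg.div_const δ)
    exact (Real.hasDerivAt_exp (-x/δ)).comp x hinner
  -- p := w' + (1/δ) w satisfies p' = (1/δ) p
  have hp : ∀ x ∈ Set.Icc (-1:ℝ) 0, HasDerivWithinAt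
      (fun y => derivWithin w (Set.Icc (-1) 0) y + (1/δ) * w y)
      ((1/δ) * (derivWithin w (Set.Icc (-1) 0) x + (1/δ) * w x)) (Set.Icc (-1) 0) x := by
    intro x hx
    have h1 := (hdfw x hx).hasDerivWithinAt
    rw [hfw x hx] at h1
    have h2 := ((hdw x hx).hasDerivWithinAt).const_mul (1/δ)
    have h3 := h1.add h2
    refine h3.congr_deriv ?_
    field_simp
    ring
  obtain ⟨C0, hC0⟩ : ∃ C0 : ℝ, C0 = (derivWithin w (Set.Icc (-1) 0) (-1) + (1/δ) * w (-1))
      * Real.exp (-(-1:ℝ)/δ) := ⟨_, rfl⟩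
  -- q := p · exp(-x/δ) is constant
  have hq : ∀ x ∈ Set.Icc (-1:ℝ) 0, HasDerivWithinAt
      (fun y => (derivWithin w (Set.Icc (-1) 0) y + (1/δ) * w y) * Real.exp (-y/δ))
      0 (Set.Icc (-1) 0) x := by
    intro x hx
    have h := (hp x hx).mul (hEneg x).hasDerivWithinAt
    refine h.congr_deriv ?_
    ring
  have hqconst : ∀ x ∈ Set.Icc (-1:ℝ) 0,
      (derivWithin w (Set.Icc (-1) 0) x + (1/δ) * w x) * Real.exp (-x/δ) = C0 := by
    refine myEqOn hm10 (d := fun _ => (0:ℝ)) hq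
      (fun x hx => hasDerivWithinAt_const x _ _) (by rw [hC0])
  have hpform : ∀ x ∈ Set.Icc (-1:ℝ) 0,
      derivWithin w (Set.Icc (-1) 0) x + (1/δ) * w x = C0 * Real.exp (x/δ) := by
    intro x hx
    have h := hqconst x hx
    have hone : Real.exp (-x/δ) * Real.exp (x/δ) = 1 := by
      rw [← Real.exp_add, show -x/δ + x/δ = (0:ℝ) by ring, Real.exp_zero]
    calc derivWithin w (Set.Icc (-1) 0) x + (1/δ) * w x
        = ((derivWithin w (Set.Icc (-1) 0) x + (1/δ) * w x) * Real.exp (-x/δ))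
          * Real.exp (x/δ) := by rw [mul_assoc, hone, mul_one]
      _ = C0 * Real.exp (x/δ) := by rw [h]
  refine ⟨C0, ?_, ?_⟩
  · -- w · exp(x/δ) has derivative C0 exp(x/δ)², compare with explicit antiderivative
    have hr : ∀ x ∈ Set.Icc (-1:ℝ) 0, HasDerivWithinAt (fun y => w y * Real.exp (y/δ))
        (C0 * Real.exp (x/δ) * Real.exp (x/δ)) (Set.Icc (-1) 0) x := by
      intro x hx
      have h := ((hdw x hx).hasDerivWithinAt).mul (hEpos x).hasDerivWithinAt
      refine h.congr_deriv ?_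
      rw [show C0 * Real.exp (x/δ) = derivWithin w (Set.Icc (-1) 0) x + (1/δ) * w x from
        (hpform x hx).symm]
      ring
    have hg : ∀ x : ℝ, HasDerivAt
        (fun y => (C0*δ/2) * (Real.exp (y/δ))^2 - (C0*δ/2) * (Real.exp ((-1:ℝ)/δ))^2)
        (C0 * Real.exp (x/δ) * Real.exp (x/δ)) x := by
      intro x
      have h := (((hEpos x).pow 2).const_mul (C0*δ/2)).sub_const
        ((C0*δ/2) * (Real.exp ((-1:ℝ)/δ))^2)
      refine h.congr_deriv ?_
      push_cast
      field_simp
    refine myEqOn hm10 (d := fun x => C0 * Real.exp (x/δ) * Real.exp (x/δ)) hr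
      (fun x _ => (hg x).hasDerivWithinAt) ?_
    rw [hwm1]
    ring
  · have h := hpform 0 h0sl
    simpa using h

lemma myIter2' {a b : ℝ} (hab : a < b) {f : ℝ → ℝ} {x : ℝ} (hx : x ∈ Set.Icc a b) :
    iteratedDerivWithin 2 f (Set.Icc a b) x
      = derivWithin (derivWithin f (Set.Icc a b)) (Set.Icc a b) x := by
  have hs := uniqueDiffOn_Icc hab
  rw [show (2:ℕ) = 1 + 1 from rfl, iteratedDerivWithin_succ',
    iteratedDerivWithin_one]

/-- Second-derivative-within of a difference of two `C²` functions on `Icc`. -/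
lemma mySubIter {a b : ℝ} (hab : a < b) {f g : ℝ → ℝ}
    (hf : ContDiffOn ℝ 2 f (Set.Icc a b)) (hg : ContDiffOn ℝ 2 g (Set.Icc a b))
    {x : ℝ} (hx : x ∈ Set.Icc a b) :
    derivWithin (derivWithin (fun y => f y - g y) (Set.Icc a b)) (Set.Icc a b) x
      = iteratedDerivWithin 2 f (Set.Icc a b) x - iteratedDerivWithin 2 g (Set.Icc a b) x := by
  have hs := uniqueDiffOn_Icc hab
  have hdf := hf.differentiableOn two_ne_zero
  have hdg := hg.differentiableOn two_ne_zero
  have hdf' : DifferentiableOn ℝ (derivWithin f (Set.Icc a b)) (Set.Icc a b) :=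
    (hf.derivWithin hs (by norm_num)).differentiableOn one_ne_zero
  have hdg' : DifferentiableOn ℝ (derivWithin g (Set.Icc a b)) (Set.Icc a b) :=
    (hg.derivWithin hs (by norm_num)).differentiableOn one_ne_zero
  have hsub : ∀ y ∈ Set.Icc a b, derivWithin (fun z => f z - g z) (Set.Icc a b) y
      = derivWithin f (Set.Icc a b) y - derivWithin g (Set.Icc a b) y := fun y hy =>
    derivWithin_sub (hdf y hy) (hdg y hy)
  rw [derivWithin_congr (fun y hy => hsub y hy) (hsub x hx),
    derivWithin_fun_sub (hdf' x hx) (hdg' x hx),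
    myIter2' hab hx, myIter2' hab hx]

/-- Continuity of the second derivative-within. -/
lemma myCont2 {a b : ℝ} (hab : a < b) {f : ℝ → ℝ}
    (hf : ContDiffOn ℝ 2 f (Set.Icc a b)) :
    ContinuousOn (derivWithin (derivWithin f (Set.Icc a b)) (Set.Icc a b)) (Set.Icc a b) := by
  have hs := uniqueDiffOn_Icc hab
  have h1 : ContDiffOn ℝ 1 (derivWithin f (Set.Icc a b)) (Set.Icc a b) :=
    hf.derivWithin hs (by norm_num)
  have h2 : ContDiffOn ℝ 0 (derivWithin (derivWithin f (Set.Icc a b)) (Set.Icc a b))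
      (Set.Icc a b) := h1.derivWithin hs (by norm_num)
  exact h2.continuousOn

lemma bj_unique (H δ η γ : ℝ) (hH : 0 < H) (hδ : 0 < δ) (hη : 0 < η) (hγ : 0 < γ)
    (Vu Vl Vu' Vl' : ℝ → ℝ)
    (hVu2 : ContDiffOn ℝ 2 Vu (Set.Icc 0 H)) (hVl2 : ContDiffOn ℝ 2 Vl (Set.Icc (-1) 0))
    (hODEu : ∀ Z ∈ Set.Ioo (0:ℝ) H, iteratedDerivWithin 2 Vu (Set.Icc 0 H) Z + 1 = 0)
    (hODEl : ∀ Z ∈ Set.Ioo (-1:ℝ) 0,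
      δ ^ 2 * iteratedDerivWithin 2 Vl (Set.Icc (-1) 0) Z - Vl Z + η * δ ^ 2 = 0)
    (hVuH : Vu H = 0) (hVlm1 : Vl (-1) = 0)
    (hIu : derivWithin Vu (Set.Icc 0 H) 0 = (1/2) * γ * (Vu 0 - Vl 0))
    (hIl : derivWithin Vl (Set.Icc (-1) 0) 0 = (1/2) * γ * η * (Vu 0 - Vl 0))
    (hVu2' : ContDiffOn ℝ 2 Vu' (Set.Icc 0 H)) (hVl2' : ContDiffOn ℝ 2 Vl' (Set.Icc (-1) 0))
    (hODEu' : ∀ Z ∈ Set.Ioo (0:ℝ) H, iteratedDerivWithin 2 Vu' (Set.Icc 0 H) Z + 1 = 0)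
    (hODEl' : ∀ Z ∈ Set.Ioo (-1:ℝ) 0,
      δ ^ 2 * iteratedDerivWithin 2 Vl' (Set.Icc (-1) 0) Z - Vl' Z + η * δ ^ 2 = 0)
    (hVuH' : Vu' H = 0) (hVlm1' : Vl' (-1) = 0)
    (hIu' : derivWithin Vu' (Set.Icc 0 H) 0 = (1/2) * γ * (Vu' 0 - Vl' 0))
    (hIl' : derivWithin Vl' (Set.Icc (-1) 0) 0 = (1/2) * γ * η * (Vu' 0 - Vl' 0)) :
    Set.EqOn Vu Vu' (Set.Icc 0 H) ∧ Set.EqOn Vl Vl' (Set.Icc (-1) 0) := by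
  have hδ0 : δ ≠ 0 := hδ.ne'
  have hm10 : (-1:ℝ) < 0 := by norm_num
  have hsu := uniqueDiffOn_Icc hH
  have hsl := uniqueDiffOn_Icc hm10
  have h0su : (0:ℝ) ∈ Set.Icc 0 H := Set.left_mem_Icc.2 hH.le
  have h0sl : (0:ℝ) ∈ Set.Icc (-1:ℝ) 0 := Set.right_mem_Icc.2 hm10.le
  have hm1sl : (-1:ℝ) ∈ Set.Icc (-1:ℝ) 0 := Set.left_mem_Icc.2 hm10.le
  -- the differences
  have hu2 : ContDiffOn ℝ 2 (fun y => Vu y - Vu' y) (Set.Icc 0 H) := hVu2.sub hVu2'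
  have hw2 : ContDiffOn ℝ 2 (fun y => Vl y - Vl' y) (Set.Icc (-1) 0) := hVl2.sub hVl2'
  have hdu := hu2.differentiableOn two_ne_zero
  have hdw := hw2.differentiableOn two_ne_zero
  have hdfu : DifferentiableOn ℝ (derivWithin (fun y => Vu y - Vu' y) (Set.Icc 0 H))
      (Set.Icc 0 H) := (hu2.derivWithin hsu (by norm_num)).differentiableOn one_ne_zero
  have hdfw : DifferentiableOn ℝ (derivWithin (fun y => Vl y - Vl' y) (Set.Icc (-1) 0))
      (Set.Icc (-1) 0) := (hw2.derivWithin hsl (by norm_num)).differentiableOn one_ne_zero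
  -- second derivative of u vanishes on the closed interval
  have huzero : ∀ x ∈ Set.Icc 0 H,
      derivWithin (derivWithin (fun y => Vu y - Vu' y) (Set.Icc 0 H)) (Set.Icc 0 H) x = 0 := by
    apply myZeroClosure hH (myCont2 hH hu2)
    intro x hx
    rw [mySubIter hH hVu2 hVu2' (Set.Ioo_subset_Icc_self hx)]
    have := hODEu x hx; have := hODEu' x hx
    linarith
  -- second derivative of w equals w/δ² on the closed interval
  have hwzero : ∀ x ∈ Set.Icc (-1:ℝ) 0,
      δ^2 * derivWithin (derivWithin (fun y => Vl y - Vl' y) (Set.Icc (-1) 0)) (Set.Icc (-1) 0) x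
        - (Vl x - Vl' x) = 0 := by
    apply myZeroClosure hm10
    · exact (continuousOn_const.mul (myCont2 hm10 hw2)).sub
        (hVl2.continuousOn.sub hVl2'.continuousOn)
    intro x hx
    rw [mySubIter hm10 hVl2 hVl2' (Set.Ioo_subset_Icc_self hx)]
    have := hODEl x hx; have := hODEl' x hx
    linarith
  have hfw : ∀ x ∈ Set.Icc (-1:ℝ) 0,
      derivWithin (derivWithin (fun y => Vl y - Vl' y) (Set.Icc (-1) 0)) (Set.Icc (-1) 0) x
        = (Vl x - Vl' x) / δ^2 := by
    intro x hx
    have h := hwzero x hx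
    field_simp
    linarith
  -- u is affine
  have hfuconst : ∀ x ∈ Set.Icc 0 H,
      derivWithin (fun y => Vu y - Vu' y) (Set.Icc 0 H) x
        = derivWithin (fun y => Vu y - Vu' y) (Set.Icc 0 H) 0 := by
    refine myEqOn hH (d := fun _ => (0:ℝ)) (fun x hx => ?_) (fun x hx => ?_) rfl
    · have h := (hdfu x hx).hasDerivWithinAt
      rwa [huzero x hx] at h
    · exact hasDerivWithinAt_const x _ _
  have hu_affine : ∀ x ∈ Set.Icc 0 H, Vu x - Vu' x
      = (Vu 0 - Vu' 0) + derivWithin (fun y => Vu y - Vu' y) (Set.Icc 0 H) 0 * x := by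
    refine myEqOn hH (d := derivWithin (fun y => Vu y - Vu' y) (Set.Icc 0 H))
      (fun x hx => (hdu x hx).hasDerivWithinAt) (fun x hx => ?_) (by ring)
    have h : HasDerivAt (fun x : ℝ => (Vu 0 - Vu' 0)
        + derivWithin (fun y => Vu y - Vu' y) (Set.Icc 0 H) 0 * x)
        (derivWithin (fun y => Vu y - Vu' y) (Set.Icc 0 H) 0) x := by
      have := ((hasDerivAt_id x).const_mul
        (derivWithin (fun y => Vu y - Vu' y) (Set.Icc 0 H) 0)).const_add (Vu 0 - Vu' 0)
      simpa using this
    rw [hfuconst x hx]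
    exact h.hasDerivWithinAt
  -- solve the w-equation
  obtain ⟨C0, hwf, hp0⟩ := myODE2 hδ hdw hdfw hfw (by rw [hVlm1, hVlm1']; ring)
  have hF0 : 0 < Real.exp ((-1:ℝ)/δ) := Real.exp_pos _
  have hF1 : Real.exp ((-1:ℝ)/δ) < 1 := by
    rw [Real.exp_lt_one_iff, show (-1:ℝ)/δ = -(1/δ) by ring]
    have : (0:ℝ) < 1/δ := by positivity
    linarith
  have e4 : Vl 0 - Vl' 0 = C0*δ/2 - C0*δ/2 * (Real.exp ((-1:ℝ)/δ))^2 := by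
    have h := hwf 0 h0sl
    simp only [zero_div, Real.exp_zero, one_pow, mul_one] at h
    linarith
  have e5' : δ * derivWithin (fun y => Vl y - Vl' y) (Set.Icc (-1) 0) 0 + (Vl 0 - Vl' 0)
      = C0 * δ := by
    field_simp at hp0
    linarith
  have e1 : derivWithin (fun y => Vu y - Vu' y) (Set.Icc 0 H) 0
      = (1/2) * γ * ((Vu 0 - Vu' 0) - (Vl 0 - Vl' 0)) := by
    rw [derivWithin_fun_sub (hVu2.differentiableOn two_ne_zero 0 h0su)
      (hVu2'.differentiableOn two_ne_zero 0 h0su), hIu, hIu']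
    ring
  have e2 : derivWithin (fun y => Vl y - Vl' y) (Set.Icc (-1) 0) 0
      = (1/2) * γ * η * ((Vu 0 - Vu' 0) - (Vl 0 - Vl' 0)) := by
    rw [derivWithin_fun_sub (hVl2.differentiableOn two_ne_zero 0 h0sl)
      (hVl2'.differentiableOn two_ne_zero 0 h0sl), hIl, hIl']
    ring
  have e3 : (0:ℝ) = (Vu 0 - Vu' 0)
      + derivWithin (fun y => Vu y - Vu' y) (Set.Icc 0 H) 0 * H := by
    have h := hu_affine H (Set.right_mem_Icc.2 hH.le)
    rw [hVuH, hVuH'] at h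
    linarith
  -- algebraic elimination
  have s1 : derivWithin (fun y => Vl y - Vl' y) (Set.Icc (-1) 0) 0
      = η * derivWithin (fun y => Vu y - Vu' y) (Set.Icc 0 H) 0 := by
    linear_combination e2 - η * e1
  have s2 : derivWithin (fun y => Vu y - Vu' y) (Set.Icc 0 H) 0 * (2 + γ*H)
      = -γ * (Vl 0 - Vl' 0) := by
    linear_combination 2 * e1 - γ * e3
  have s3 : δ * (η * derivWithin (fun y => Vu y - Vu' y) (Set.Icc 0 H) 0)
      = C0 * δ - (Vl 0 - Vl' 0) := by
    linear_combination e5' - δ * s1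
  have s5 : (C0 * δ - (Vl 0 - Vl' 0)) * (2 + γ*H) + γ*η*δ*(Vl 0 - Vl' 0) = 0 := by
    linear_combination δ * η * s2 - (2 + γ*H) * s3
  have key : C0 * δ * ((1 + (Real.exp ((-1:ℝ)/δ))^2) * (2 + γ*H)
      + γ*η*δ*(1 - (Real.exp ((-1:ℝ)/δ))^2)) = 0 := by
    linear_combination 2 * s5 + 2 * ((2 + γ*H) - γ*η*δ) * e4
  have hbr : 0 < δ * ((1 + (Real.exp ((-1:ℝ)/δ))^2) * (2 + γ*H)
      + γ*η*δ*(1 - (Real.exp ((-1:ℝ)/δ))^2)) := by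
    have h1 : 0 < 1 - (Real.exp ((-1:ℝ)/δ))^2 := by nlinarith
    have h2 : 0 < γ*η*δ*(1 - (Real.exp ((-1:ℝ)/δ))^2) := by positivity
    have h3 : 0 < (1 + (Real.exp ((-1:ℝ)/δ))^2) * (2 + γ*H) := by positivity
    positivity
  have key2 : C0 * (δ * ((1 + (Real.exp ((-1:ℝ)/δ))^2) * (2 + γ*H)
      + γ*η*δ*(1 - (Real.exp ((-1:ℝ)/δ))^2))) = 0 := by linear_combination key
  have hC0 : C0 = 0 := by
    rcases mul_eq_zero.1 key2 with h | h
    · exact h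
    · exact absurd h hbr.ne'
  -- conclude everything vanishes
  have hw0 : Vl 0 - Vl' 0 = 0 := by rw [e4, hC0]; ring
  have ha : derivWithin (fun y => Vu y - Vu' y) (Set.Icc 0 H) 0 = 0 := by
    have h : derivWithin (fun y => Vu y - Vu' y) (Set.Icc 0 H) 0 * (2 + γ*H) = 0 := by
      rw [s2, hw0]; ring
    have hpos : (0:ℝ) < 2 + γ*H := by nlinarith
    rcases mul_eq_zero.1 h with h' | h'
    · exact h'
    · exact absurd h' hpos.ne'
  have hu0 : Vu 0 - Vu' 0 = 0 := by rw [ha] at e3; linarith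
  constructor
  · intro x hx
    have h := hu_affine x hx
    rw [hu0, ha] at h
    have : Vu x - Vu' x = 0 := by rw [h]; ring
    linarith
  · intro x hx
    have h := hwf x hx
    rw [hC0] at h
    have hz : (Vl x - Vl' x) * Real.exp (x/δ) = 0 := by rw [h]; ring
    have := Real.exp_pos (x/δ)
    have hwx : Vl x - Vl' x = 0 := by
      rcases mul_eq_zero.1 hz with h' | h'
      · exact h'
      · exact absurd h' (Real.exp_ne_zero _)
    linarith

lemma myIter2 {a b : ℝ} (hab : a < b) {f : ℝ → ℝ} {x : ℝ} (hx : x ∈ Set.Icc a b) :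
    iteratedDerivWithin 2 f (Set.Icc a b) x
      = derivWithin (derivWithin f (Set.Icc a b)) (Set.Icc a b) x := by
  have hs := uniqueDiffOn_Icc hab
  rw [show (2:ℕ) = 1 + 1 from rfl, iteratedDerivWithin_succ',
    iteratedDerivWithin_one]

lemma myIter2Global {a b x : ℝ} (hab : a < b) (hx : x ∈ Set.Icc a b) {f : ℝ → ℝ}
    (hf : Differentiable ℝ f) (hf2 : DifferentiableAt ℝ (deriv f) x) :
    iteratedDerivWithin 2 f (Set.Icc a b) x = deriv (deriv f) x := by
  have hs := uniqueDiffOn_Icc hab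
  rw [myIter2 hab hx]
  have h1 : Set.EqOn (derivWithin f (Set.Icc a b)) (deriv f) (Set.Icc a b) :=
    fun y hy => (hf y).derivWithin (hs y hy)
  rw [derivWithin_congr h1 (h1 hx)]
  exact hf2.derivWithin (hs x hx)

lemma bj_exists_of (H δ η γ α β P Q : ℝ) (hH : 0 < H) (hδ : 0 < δ)
    (hβ : β = H^2/2 - α*H)
    (hPQ : P - Q = η*δ*α)
    (hBC : η*δ^2 + P*Real.exp (-(1/δ)) + Q*Real.exp (1/δ) = 0)
    (hα : α = (1/2)*γ*((H^2/2 - α*H) - (η*δ^2 + P + Q))) :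
    IsBJSolution H δ η γ (fun Z => -Z^2/2 + α*Z + β)
      (fun Z => η*δ^2 + P*Real.exp (Z/δ) + Q*Real.exp (-Z/δ)) := by
  have hδ0 : δ ≠ 0 := hδ.ne'
  have hsu := uniqueDiffOn_Icc hH
  have hsl := uniqueDiffOn_Icc (show (-1:ℝ) < 0 by norm_num)
  -- derivative facts for Vu
  have hVuD : ∀ Z : ℝ, HasDerivAt (fun Z : ℝ => -Z^2/2 + α*Z + β) (α - Z) Z := by
    intro Z
    have h := (((hasDerivAt_pow 2 Z).neg.div_const 2).add
      ((hasDerivAt_id Z).const_mul α)).add_const β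
    refine h.congr_deriv ?_
    push_cast
    ring
  have hVu' : deriv (fun Z : ℝ => -Z^2/2 + α*Z + β) = fun Z => α - Z :=
    funext fun Z => (hVuD Z).deriv
  have hVuD2 : ∀ Z : ℝ, HasDerivAt (fun Z : ℝ => α - Z) (-1) Z := by
    intro Z
    simpa using (hasDerivAt_id Z).const_sub α
  -- derivative facts for Vl
  have hE1 : ∀ Z : ℝ, HasDerivAt (fun x : ℝ => Real.exp (x/δ)) (Real.exp (Z/δ) * (1/δ)) Z :=
    fun Z => by have := (Real.hasDerivAt_exp (Z/δ)).comp Z ((hasDerivAt_id Z).div_const δ); exact this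
  have hE2 : ∀ Z : ℝ, HasDerivAt (fun x : ℝ => Real.exp (-x/δ)) (Real.exp (-Z/δ) * (-1/δ)) Z := by
    intro Z
    have hinner : HasDerivAt (fun x : ℝ => -x/δ) (-1/δ) Z := by
      simpa using ((hasDerivAt_id Z).neg.div_const δ)
    exact (Real.hasDerivAt_exp (-Z/δ)).comp Z hinner
  have hVlD : ∀ Z : ℝ, HasDerivAt (fun Z : ℝ => η*δ^2 + P*Real.exp (Z/δ) + Q*Real.exp (-Z/δ))
      ((P*Real.exp (Z/δ) - Q*Real.exp (-Z/δ))/δ) Z := by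
    intro Z
    have h := (((hE1 Z).const_mul P).const_add (η*δ^2)).add ((hE2 Z).const_mul Q)
    refine h.congr_deriv ?_
    ring
  have hVl' : deriv (fun Z : ℝ => η*δ^2 + P*Real.exp (Z/δ) + Q*Real.exp (-Z/δ))
      = fun Z => (P*Real.exp (Z/δ) - Q*Real.exp (-Z/δ))/δ :=
    funext fun Z => (hVlD Z).deriv
  have hVlD2 : ∀ Z : ℝ, HasDerivAt (fun Z : ℝ => (P*Real.exp (Z/δ) - Q*Real.exp (-Z/δ))/δ)
      ((P*Real.exp (Z/δ) + Q*Real.exp (-Z/δ))/δ^2) Z := by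
    intro Z
    have h := (((hE1 Z).const_mul P).sub ((hE2 Z).const_mul Q)).div_const δ
    refine h.congr_deriv ?_
    ring
  have hVudiff : Differentiable ℝ (fun Z : ℝ => -Z^2/2 + α*Z + β) :=
    fun Z => (hVuD Z).differentiableAt
  have hVldiff : Differentiable ℝ (fun Z : ℝ => η*δ^2 + P*Real.exp (Z/δ) + Q*Real.exp (-Z/δ)) :=
    fun Z => (hVlD Z).differentiableAt
  refine ⟨?_, ?_, ?_, ?_, ?_, ?_, ?_, ?_⟩
  · refine ContDiff.contDiffOn ?_
    exact (((contDiff_id.pow 2).neg.div_const 2).add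
      (contDiff_const.mul contDiff_id)).add contDiff_const
  · refine ContDiff.contDiffOn ?_
    exact (contDiff_const.add (contDiff_const.mul
      (Real.contDiff_exp.comp (contDiff_id.div_const δ)))).add
      (contDiff_const.mul (Real.contDiff_exp.comp (contDiff_id.neg.div_const δ)))
  · intro Z hZ
    rw [myIter2Global hH (Set.Ioo_subset_Icc_self hZ) hVudiff
      (by rw [hVu']; exact (hVuD2 Z).differentiableAt)]
    rw [hVu', (hVuD2 Z).deriv]
    ring
  · intro Z hZ
    rw [myIter2Global (show (-1:ℝ) < 0 by norm_num) (Set.Ioo_subset_Icc_self hZ) hVldiff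
      (by rw [hVl']; exact (hVlD2 Z).differentiableAt)]
    rw [hVl', (hVlD2 Z).deriv]
    field_simp
    ring
  · show -H^2/2 + α*H + β = 0
    rw [hβ]; ring
  · show η*δ^2 + P*Real.exp ((-1)/δ) + Q*Real.exp (-(-1)/δ) = 0
    rw [show ((-1:ℝ))/δ = -(1/δ) by ring, show (-(-1:ℝ))/δ = 1/δ by ring]
    exact hBC
  · have l1 : derivWithin (fun Z : ℝ => -Z^2/2 + α*Z + β) (Set.Icc 0 H) 0 = α := by
      rw [(hVudiff 0).derivWithin (hsu 0 (Set.left_mem_Icc.2 hH.le)), hVu']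
      norm_num
    have l2 : (fun Z : ℝ => -Z^2/2 + α*Z + β) 0 = β := by norm_num
    have l3 : (fun Z : ℝ => η*δ^2 + P*Real.exp (Z/δ) + Q*Real.exp (-Z/δ)) 0
        = η*δ^2 + P + Q := by norm_num
    rw [l1, l2, l3, hβ]
    linarith [hα]
  · have l1 : derivWithin (fun Z : ℝ => η*δ^2 + P*Real.exp (Z/δ) + Q*Real.exp (-Z/δ))
        (Set.Icc (-1) 0) 0 = (P - Q)/δ := by
      rw [(hVldiff 0).derivWithin (hsl 0 (Set.right_mem_Icc.2 (by norm_num))), hVl']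
      norm_num
    have l2 : (fun Z : ℝ => -Z^2/2 + α*Z + β) 0 = β := by norm_num
    have l3 : (fun Z : ℝ => η*δ^2 + P*Real.exp (Z/δ) + Q*Real.exp (-Z/δ)) 0
        = η*δ^2 + P + Q := by norm_num
    have l4 : (P - Q)/δ = η * α := by rw [hPQ]; field_simp
    rw [l1, l2, l3, l4, hβ]
    linear_combination η * hα

lemma bj_exists (H δ η γ : ℝ) (hH : 0 < H) (hδ : 0 < δ) (hη : 0 < η) (hγ : 0 < γ) :
    ∃ Vu Vl : ℝ → ℝ, IsBJSolution H δ η γ Vu Vl := by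
  have hδ0 : δ ≠ 0 := hδ.ne'
  obtain ⟨E, hE⟩ : ∃ E : ℝ, E = Real.exp (1/δ) := ⟨_, rfl⟩
  have hE1 : 1 < E := by
    have h := Real.add_one_le_exp (1/δ)
    have h0 : 0 < 1/δ := by positivity
    rw [hE]; linarith
  have hE0 : (0:ℝ) < E := lt_trans one_pos hE1
  have hEsq : (0:ℝ) < E^2 + 1 := by positivity
  obtain ⟨D, hD⟩ : ∃ D : ℝ, D = (E^2+1) + γ*H*(E^2+1)/2 + γ*η*δ*(E^2-1)/2 := ⟨_, rfl⟩
  have hD0 : 0 < D := by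
    have h1 : 0 < γ*H*(E^2+1)/2 := by positivity
    have hEm : (0:ℝ) < E^2 - 1 := by nlinarith
    have h2 : 0 < γ*η*δ*(E^2-1)/2 := by
      have := mul_pos (mul_pos (mul_pos hγ hη) hδ) hEm
      linarith
    rw [hD]; linarith
  obtain ⟨α, hα⟩ : ∃ α : ℝ,
    α = (γ*(H^2/2 - η*δ^2)*(E^2+1)/2 + γ*δ^2*η*E) / D := ⟨_, rfl⟩
  obtain ⟨P, hP⟩ : ∃ P : ℝ, P = δ*η*(α*E - δ)*E/(E^2+1) := ⟨_, rfl⟩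
  refine ⟨_, _, bj_exists_of H δ η γ α (H^2/2 - α*H) P (P - η*δ*α) hH hδ rfl (by ring) ?_ ?_⟩
  · rw [Real.exp_neg, ← hE, hP]
    field_simp
    ring
  · have hαkey : α * D = γ*(H^2/2 - η*δ^2)*(E^2+1)/2 + γ*δ^2*η*E := by
      rw [hα]; field_simp
    have hA : α*((E^2+1) + γ*H*(E^2+1)/2 + γ*η*δ*(E^2-1)/2)
        = γ*(H^2/2 - η*δ^2)*(E^2+1)/2 + γ*δ^2*η*E := by rw [← hD]; exact hαkey
    have hPkey : P*(E^2+1) = δ*η*(α*E - δ)*E := by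
      rw [hP]; field_simp
    have h2E : (2*(E^2+1)) ≠ 0 := by positivity
    refine mul_left_cancel₀ h2E ?_
    linear_combination 2*hA + 2*γ*hPkey

/-- For positive parameters `H, δ, η, γ`, the Beavers–Joseph boundary value problem has a
solution, unique as a pair of functions on the closed intervals `[0,H]` and `[−1,0]`. -/
theorem beavers_joseph_existence_uniqueness
    (H δ η γ : ℝ) (hH : 0 < H) (hδ : 0 < δ) (hη : 0 < η) (hγ : 0 < γ) :
    (∃ Vu Vl : ℝ → ℝ, IsBJSolution H δ η γ Vu Vl) ∧
      (∀ Vu Vl Vu' Vl' : ℝ → ℝ, IsBJSolution H δ η γ Vu Vl → IsBJSolution H δ η γ Vu' Vl' →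
        Set.EqOn Vu Vu' (Set.Icc 0 H) ∧ Set.EqOn Vl Vl' (Set.Icc (-1) 0)) := by
  refine ⟨bj_exists H δ η γ hH hδ hη hγ, ?_⟩
  intro Vu Vl Vu' Vl' s1 s2
  obtain ⟨a1, a2, a3, a4, a5, a6, a7, a8⟩ := s1
  obtain ⟨b1, b2, b3, b4, b5, b6, b7, b8⟩ := s2
  exact bj_unique H δ η γ hH hδ hη hγ Vu Vl Vu' Vl' a1 a2 a3 a4 a5 a6 a7 a8
    b1 b2 b3 b4 b5 b6 b7 b8
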